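/- Define φ_{m,n} ∈ ℚ[p^{±1/2}][[q]] for integers m,n by the differential equation D_τ φ_{m,n} = m n φ_m φ_n F + (D_τ φ_m)(D_τ φ_n) together with vanishing constant term φ_{m,n} = O(q), where φ_m are the solutions of D_τ^2 φ_m = m^2 F φ_m with constant term p^{m/2}-p^{-m/2}. Then for all m, n with m + n ≠ 0: φ_{m,n} = (m/(m+n)) φ_m D_τ(φ_n) + (n/(m+n)) D_τ(φ_m) φ_n. -/

import Mathlib

noncomputable section

open LaurentPolynomial

/-- `ℚ[p^{±1/2}]` as Laurent polynomials in `s = p^{1/2}`, so `p^{m/2} = T m`. -/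
abbrev L : Type := LaurentPolynomial ℚ

/-- `D_τ = q d/dq` on `ℚ[p^{±1/2}][[q]]`. -/
def Dtau (f : PowerSeries L) : PowerSeries L :=
  PowerSeries.mk fun n => (n : ℚ) • PowerSeries.coeff (R := L) n f

/-- `F = D_τ²Θ/Θ = -∑_{n≥1} ∑_{d|n} (n/d)^3 (p^{d/2}-p^{-d/2})^2 q^n`. -/
def Fser : PowerSeries L :=
  PowerSeries.mk fun n =>
    -∑ d ∈ n.divisors, ((n / d : ℕ) : ℚ) ^ 3 • (T (d : ℤ) - T (-(d : ℤ))) ^ 2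

lemma Dtau_add (f g : PowerSeries L) : Dtau (f + g) = Dtau f + Dtau g := by
  refine PowerSeries.ext fun n => ?_
  rw [map_add]
  rw [show Dtau (f+g) = PowerSeries.mk fun k => (k : ℚ) • PowerSeries.coeff (R := L) k (f+g) from rfl,
    show Dtau f = PowerSeries.mk fun k => (k : ℚ) • PowerSeries.coeff (R := L) k f from rfl,
    show Dtau g = PowerSeries.mk fun k => (k : ℚ) • PowerSeries.coeff (R := L) k g from rfl,
    PowerSeries.coeff_mk, PowerSeries.coeff_mk, PowerSeries.coeff_mk, map_add, smul_add]

lemma Dtau_smul (c : ℚ) (f : PowerSeries L) : Dtau (c • f) = c • Dtau f := by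
  refine PowerSeries.ext fun n => ?_
  rw [show Dtau (c • f) = PowerSeries.mk fun k => (k : ℚ) • PowerSeries.coeff (R := L) k (c • f) from rfl,
    show Dtau f = PowerSeries.mk fun k => (k : ℚ) • PowerSeries.coeff (R := L) k f from rfl,
    PowerSeries.coeff_mk, PowerSeries.coeff_smul, PowerSeries.coeff_smul, PowerSeries.coeff_mk,
    smul_comm]

lemma Dtau_mul (f g : PowerSeries L) : Dtau (f * g) = Dtau f * g + f * Dtau g := by
  refine PowerSeries.ext fun n => ?_
  simp only [Dtau, PowerSeries.coeff_mk, PowerSeries.coeff_mul, map_add,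
    Finset.smul_sum, ← Finset.sum_add_distrib]
  refine Finset.sum_congr rfl fun x hx => ?_
  rw [Finset.HasAntidiagonal.mem_antidiagonal] at hx
  subst hx
  push_cast
  rw [smul_mul_assoc, mul_smul_comm, ← add_smul, add_comm (x.1:ℚ)]

lemma Dtau_ext (f g : PowerSeries L) (h0 : PowerSeries.coeff (R := L) 0 f = PowerSeries.coeff (R := L) 0 g)
    (hD : Dtau f = Dtau g) : f = g := by
  refine PowerSeries.ext fun k => ?_
  cases k with
  | zero => exact h0
  | succ k =>
    have := congrArg (PowerSeries.coeff (R := L) (k+1)) hD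
    simp only [Dtau, PowerSeries.coeff_mk] at this
    exact smul_right_injective L (by positivity : ((k:ℚ)+1) ≠ 0) (by push_cast at this ⊢; exact this)


/-- **Proposition 4.1.** Let `φ_m, φ_n` solve `D_τ² φ_m = m² F φ_m` with constant terms
`p^{m/2}-p^{-m/2}`, and let `φ_{m,n}` solve `D_τ φ_{m,n} = mn φ_m φ_n F + (D_τφ_m)(D_τφ_n)`
with vanishing constant term.  If `m + n ≠ 0` then
`φ_{m,n} = (m/(m+n)) φ_m D_τ(φ_n) + (n/(m+n)) D_τ(φ_m) φ_n`. -/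
theorem stmt8 (m n : ℤ) (hmn : m + n ≠ 0) (φm φn φmn : PowerSeries L)
    (hmc : PowerSeries.coeff (R := L) 0 φm = T m - T (-m))
    (hm : Dtau (Dtau φm) = ((m : ℚ) ^ 2) • (Fser * φm))
    (hnc : PowerSeries.coeff (R := L) 0 φn = T n - T (-n))
    (hn : Dtau (Dtau φn) = ((n : ℚ) ^ 2) • (Fser * φn))
    (hmnc : PowerSeries.coeff (R := L) 0 φmn = 0)
    (hmn' : Dtau φmn = ((m : ℚ) * (n : ℚ)) • (φm * φn * Fser) + Dtau φm * Dtau φn) :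
    φmn = ((m : ℚ) / ((m : ℚ) + (n : ℚ))) • (φm * Dtau φn)
        + ((n : ℚ) / ((m : ℚ) + (n : ℚ))) • (Dtau φm * φn) := by
  have hK : ((m:ℚ) + n) ≠ 0 := by exact_mod_cast hmn
  apply Dtau_ext
  · simp [hmnc, smul_sub, PowerSeries.coeff_mul, Finset.Nat.antidiagonal_zero, Dtau]
  · rw [hmn', Dtau_add, Dtau_smul, Dtau_smul, Dtau_mul, Dtau_mul, hm, hn]
    rw [smul_add, smul_add]
    have e1 : ((m:ℚ) / (m + n)) • (φm * (n:ℚ)^2 • (Fser * φn))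
        = ((m:ℚ) * n * (n / (m+n))) • (φm * φn * Fser) := by
      rw [mul_smul_comm]; rw [smul_smul]; congr 1
      · field_simp
      · ring
    have e2 : ((n:ℚ) / (m + n)) • ((m:ℚ)^2 • (Fser * φm) * φn)
        = ((m:ℚ) * n * (m / (m+n))) • (φm * φn * Fser) := by
      rw [smul_mul_assoc]; rw [smul_smul]; congr 1
      · field_simp
      · ring
    rw [e1, e2]
    have e3 : ((m:ℚ) / (m + n)) • (Dtau φm * Dtau φn) + ((n:ℚ) / (m + n)) • (Dtau φm * Dtau φn)
        = Dtau φm * Dtau φn := by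
      rw [← add_smul]; rw [← add_div, div_self hK, one_smul]
    have e4 : ((m:ℚ) * n * (n / (m+n))) • (φm * φn * Fser) + ((m:ℚ) * n * (m / (m+n))) • (φm * φn * Fser)
        = ((m:ℚ) * n) • (φm * φn * Fser) := by
      rw [← add_smul]; congr 1; field_simp; ring
    calc ((m:ℚ) * n) • (φm * φn * Fser) + Dtau φm * Dtau φn
        = (((m:ℚ) * n * (n / (m+n))) • (φm * φn * Fser) + ((m:ℚ) * n * (m / (m+n))) • (φm * φn * Fser))
          + (((m:ℚ) / (m + n)) • (Dtau φm * Dtau φn) + ((n:ℚ) / (m + n)) • (Dtau φm * Dtau φn)) := by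
          rw [e3, e4]
      _ = _ := by abel


end
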